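/- Let $T:E\to F$ be a bounded operator between Banach lattices with $T(E^+)=F^+$ and such that $\ker(T)$ is an ideal of $E$. Then $T$ is a surjective lattice homomorphism, and $T$ is unbounded norm continuous. -/

import Mathlib

open Filter Topology

section Defs
variable {α : Type*} [Lattice α] [AddCommGroup α]

/-- Order convergence to zero of a net, witnessed by a decreasing dominating net. -/
def OConvZero {ι : Type*} [Preorder ι] (x : ι → α) : Prop :=
  ∃ (κ : Type) (_ : Nonempty κ) (_ : Preorder κ) (_ : IsDirected κ (· ≤ ·)) (z : κ → α),
    Antitone z ∧ IsGLB (Set.range z) 0 ∧ ∀ β : κ, ∃ α₀, ∀ a ≥ α₀, |x a| ≤ z β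

/-- Unbounded order convergence to zero of a net. -/
def UOConvZero {ι : Type*} [Preorder ι] (x : ι → α) : Prop :=
  ∀ u : α, 0 ≤ u → OConvZero (fun a => |x a| ⊓ u)

end Defs

/-- Unbounded norm convergence to zero of a net in a normed lattice. -/
def UNConvZero {α : Type*} [NormedAddCommGroup α] [Lattice α] {ι : Type*} [Preorder ι]
    (x : ι → α) : Prop :=
  ∀ u : α, 0 ≤ u → Tendsto (fun a => ‖|x a| ⊓ u‖) atTop (𝓝 0)

def UnContinuous {E F : Type*} [NormedAddCommGroup E] [Lattice E] [HasSolidNorm E] [IsOrderedAddMonoid E] [Module ℝ E]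
    [NormedAddCommGroup F] [Lattice F] [HasSolidNorm F] [IsOrderedAddMonoid F] [Module ℝ F] (T : E →ₗ[ℝ] F) : Prop :=
  ∀ (ι : Type) (_ : Nonempty ι) (_ : Preorder ι) (_ : IsDirected ι (· ≤ ·))
    (x : ι → E), UNConvZero x → UNConvZero (fun a => T (x a))


/-- a bounded operator between Banach lattices with T(E⁺)=F⁺ whose
kernel is an ideal is a surjective lattice homomorphism, and is un-continuous. -/
theorem unContinuous_of_pos_surjective_ideal_kernel
    {E F : Type*} [NormedAddCommGroup E] [Lattice E] [HasSolidNorm E] [IsOrderedAddMonoid E] [NormedSpace ℝ E] [CompleteSpace E]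
    [NormedAddCommGroup F] [Lattice F] [HasSolidNorm F] [IsOrderedAddMonoid F] [NormedSpace ℝ F] [CompleteSpace F]
    (T : E →L[ℝ] F)
    (hpos : T '' {x : E | 0 ≤ x} = {y : F | 0 ≤ y})
    (hker : ∀ x y : E, |x| ≤ |y| → T y = 0 → T x = 0) :
    (∀ x y : E, T (x ⊔ y) = T x ⊔ T y) ∧ Function.Surjective T ∧
      UnContinuous (T : E →ₗ[ℝ] F) := by
  have Tpos : ∀ x : E, 0 ≤ x → 0 ≤ T x := by
    intro x hx
    have : T x ∈ {y : F | 0 ≤ y} := hpos ▸ ⟨x, hx, rfl⟩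
    exact this
  have Tsurj : ∀ y : F, 0 ≤ y → ∃ x : E, 0 ≤ x ∧ T x = y := by
    intro y hy
    have : y ∈ T '' {x : E | 0 ≤ x} := hpos ▸ hy
    obtain ⟨x, hx, hxy⟩ := this
    exact ⟨x, hx, hxy⟩
  have Tmono : ∀ x y : E, x ≤ y → T x ≤ T y := by
    intro x y h
    have := Tpos (y - x) (by simpa using h)
    rw [map_sub] at this
    exact sub_nonneg.1 this
  -- Lemma A : if T u ≤ 0 then T (u⁺) = 0
  have lemA : ∀ u : E, T u ≤ 0 → T (u ⊔ 0) = 0 := by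
    intro u hu
    obtain ⟨v, hv, hTv⟩ := Tsurj (-T u) (by simpa using hu)
    have hker' : T (u + v) = 0 := by rw [map_add, hTv]; abel
    have habs : |u ⊔ 0| ≤ |u + v| := by
      have h1 : u ⊔ 0 ≤ (u + v) ⊔ 0 := sup_le_sup_right (le_add_of_nonneg_right hv) 0
      have h0 : (0 : E) ≤ u ⊔ 0 := le_sup_right
      calc |u ⊔ 0| = u ⊔ 0 := abs_of_nonneg h0
        _ ≤ (u + v) ⊔ 0 := h1
        _ ≤ |u + v| := sup_le (le_abs_self _) (abs_nonneg _)
    exact hker _ _ habs hker'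
  have hpospart : ∀ x : E, T (x ⊔ 0) = T x ⊔ 0 := by
    intro x
    obtain ⟨w, hw, hTw⟩ := Tsurj (T x ⊔ 0) le_sup_right
    have h1 : T ((x - w) ⊔ 0) = 0 := by
      refine lemA _ ?_
      rw [map_sub, hTw, sub_nonpos]
      exact le_sup_left
    have key : x ⊔ w = w + ((x - w) ⊔ 0) := by
      rw [add_sup, add_zero, add_sub_cancel]
    have h2 : T (x ⊔ w) = T x ⊔ 0 := by
      rw [key, map_add, h1, add_zero, hTw]
    have hle : T (x ⊔ 0) ≤ T x ⊔ 0 := by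
      have hxw : x ⊔ 0 ≤ x ⊔ w := sup_le_sup_left hw x
      calc T (x ⊔ 0) ≤ T (x ⊔ w) := Tmono _ _ hxw
        _ = T x ⊔ 0 := h2
    have hge : T x ⊔ 0 ≤ T (x ⊔ 0) :=
      sup_le (Tmono _ _ le_sup_left) (Tpos _ le_sup_right)
    exact le_antisymm hle hge
  have hsup : ∀ x y : E, T (x ⊔ y) = T x ⊔ T y := by
    intro x y
    have key : x ⊔ y = y + ((x - y) ⊔ 0) := by
      rw [add_sup, add_zero, add_sub_cancel]
    rw [key, map_add, hpospart, map_sub, add_sup, add_zero, add_sub_cancel]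
  have habsT : ∀ x : E, T |x| = |T x| := by
    intro x
    rw [show |x| = x ⊔ -x from rfl, show |T x| = T x ⊔ -(T x) from rfl, hsup, map_neg]
  have hinf : ∀ x y : E, T (x ⊓ y) = T x ⊓ T y := by
    intro x y
    have key : x ⊓ y = -((-x) ⊔ (-y)) := by
      rw [← neg_inf, neg_neg]
    rw [key, map_neg, hsup, map_neg, map_neg, ← neg_inf, neg_neg]
  refine ⟨hsup, ?_, ?_⟩
  · -- surjectivity
    intro y
    obtain ⟨a, _, ha⟩ := Tsurj (y ⊔ 0) le_sup_right
    obtain ⟨b, _, hb⟩ := Tsurj ((-y) ⊔ 0) le_sup_right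
    refine ⟨a - b, ?_⟩
    rw [map_sub, ha, hb]
    have := posPart_sub_negPart y
    rw [posPart_def, negPart_def] at this
    exact this
  · -- un-continuity
    intro ι _ _ _ x hx u hu
    obtain ⟨v, hv, hTv⟩ := Tsurj u hu
    have key : ∀ a : ι, |(T : E →ₗ[ℝ] F) (x a)| ⊓ u = T (|x a| ⊓ v) := by
      intro a
      rw [hinf, habsT, hTv]
      rfl
    have h0 : ∀ a : ι, (0 : ℝ) ≤ ‖|(T : E →ₗ[ℝ] F) (x a)| ⊓ u‖ := fun a => norm_nonneg _
    have hb : ∀ a : ι, ‖|(T : E →ₗ[ℝ] F) (x a)| ⊓ u‖ ≤ ‖T‖ * ‖|x a| ⊓ v‖ := by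
      intro a
      rw [key a]
      exact T.le_opNorm _
    have htend : Tendsto (fun a : ι => ‖T‖ * ‖|x a| ⊓ v‖) atTop (𝓝 0) := by
      have := (hx v hv).const_mul ‖T‖
      simpa using this
    exact squeeze_zero h0 hb htend
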